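/- With the notation above, the effective dimension increment Δ = (k - k̄^T (K_t + γI)^{-1} k̄ - γ k̄^T (K_t + γI)^{-2} k̄)/ξ is nonnegative; equivalently, k - k̄^T (K_t + γI)^{-1} k̄ - γ k̄^T (K_t + γI)^{-2} k̄ ≥ 0. In particular the effective dimension d_eff(γ)_t is monotonically non-decreasing in t. -/

import Mathlib

open Matrix

lemma unit_of_smul_one (c : ℝ) :
    (Matrix.of fun (_ _ : Unit) => c) = c • (1 : Matrix Unit Unit ℝ) := by
  ext i j
  simp [Matrix.one_apply, Subsingleton.elim i j]

lemma trace_fromBlocks_aux {n : Type*} [Fintype n] (A : Matrix n n ℝ)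
    (B : Matrix n Unit ℝ) (C : Matrix Unit n ℝ) (D : Matrix Unit Unit ℝ) :
    Matrix.trace (Matrix.fromBlocks A B C D) = Matrix.trace A + Matrix.trace D := by
  simp [Matrix.trace, Fintype.sum_sum_type, Matrix.diag]

/-- The effective dimension increment is nonnegative, hence the effective dimension is
monotonically non-decreasing. -/
theorem deff_increment_nonneg {D t : ℕ} (Φ : Matrix (Fin D) (Fin t) ℝ)
    (φ : Fin D → ℝ) (γ : ℝ) (hγ : 0 < γ) :
    let K : Matrix (Fin t) (Fin t) ℝ := Φᵀ * Φ
    let kb : Fin t → ℝ := Φᵀ *ᵥ φ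
    let k : ℝ := φ ⬝ᵥ φ
    let K' : Matrix (Fin t ⊕ Unit) (Fin t ⊕ Unit) ℝ :=
      Matrix.fromBlocks K (Matrix.of fun i _ => kb i) (Matrix.of fun _ j => kb j)
        (Matrix.of fun _ _ => k)
    0 ≤ k - kb ⬝ᵥ ((K + γ • 1)⁻¹ *ᵥ kb) - γ * (kb ⬝ᵥ (((K + γ • 1)⁻¹ ^ 2) *ᵥ kb)) ∧
    Matrix.trace (K * (K + γ • 1)⁻¹) ≤ Matrix.trace (K' * (K' + γ • 1)⁻¹) := by
  intro K kb k K'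
  have hK : K.PosSemidef := by
    have h := Matrix.posSemidef_conjTranspose_mul_self Φ
    rwa [Matrix.conjTranspose_eq_transpose_of_trivial] at h
  have hγ1 : (γ • (1 : Matrix (Fin t) (Fin t) ℝ)).PosDef := by
    rw [Matrix.smul_one_eq_diagonal]
    exact Matrix.posDef_diagonal_iff.mpr fun _ => hγ
  have hA : (K + γ • (1 : Matrix (Fin t) (Fin t) ℝ)).PosDef :=
    Matrix.PosDef.posSemidef_add hK hγ1
  set A := K + γ • (1 : Matrix (Fin t) (Fin t) ℝ) with hAdef
  have hdet : IsUnit A.det := isUnit_iff_ne_zero.mpr hA.det_pos.ne'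
  have hAA : A * A⁻¹ = 1 := Matrix.mul_nonsing_inv A hdet
  have hAsym : Aᵀ = A := by
    have h := hA.isHermitian
    rwa [Matrix.IsHermitian, Matrix.conjTranspose_eq_transpose_of_trivial] at h
  have hAinvsym : (A⁻¹)ᵀ = A⁻¹ := by rw [Matrix.transpose_nonsing_inv, hAsym]
  set w := A⁻¹ *ᵥ kb with hwdef
  have hAw : A *ᵥ w = kb := by rw [hwdef, Matrix.mulVec_mulVec, hAA, Matrix.one_mulVec]
  have hKA : K = A - γ • 1 := by rw [hAdef, add_sub_cancel_right]
  have hwA : kb ᵥ* A⁻¹ = w := by rw [← Matrix.mulVec_transpose, hAinvsym]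
  have hs2 : kb ⬝ᵥ (A⁻¹ *ᵥ w) = w ⬝ᵥ w := by rw [Matrix.dotProduct_mulVec, hwA]
  have hf1 : φ ⬝ᵥ (Φ *ᵥ w) = kb ⬝ᵥ w := by
    rw [Matrix.dotProduct_mulVec]
    congr 1
    rw [← Matrix.mulVec_transpose]
  have hKw : K *ᵥ w = kb - γ • w := by
    rw [hKA, Matrix.sub_mulVec, hAw, Matrix.smul_mulVec, Matrix.one_mulVec]
  have hf3 : (Φ *ᵥ w) ⬝ᵥ (Φ *ᵥ w) = kb ⬝ᵥ w - γ * (w ⬝ᵥ w) := by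
    have h1 : w ⬝ᵥ (K *ᵥ w) = (Φ *ᵥ w) ⬝ᵥ (Φ *ᵥ w) := by
      show w ⬝ᵥ ((Φᵀ * Φ) *ᵥ w) = _
      rw [← Matrix.mulVec_mulVec, Matrix.dotProduct_mulVec, Matrix.vecMul_transpose]
    rw [← h1, hKw, dotProduct_sub, dotProduct_smul, smul_eq_mul,
      dotProduct_comm w kb]
  have hvv : 0 ≤ (φ - Φ *ᵥ w) ⬝ᵥ (φ - Φ *ᵥ w) :=
    Finset.sum_nonneg fun i _ => mul_self_nonneg _
  have hexp : (φ - Φ *ᵥ w) ⬝ᵥ (φ - Φ *ᵥ w) = k - kb ⬝ᵥ w - γ * (w ⬝ᵥ w) := by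
    have hk : φ ⬝ᵥ φ = k := rfl
    rw [sub_dotProduct, dotProduct_sub, dotProduct_sub, hf3, hf1,
      dotProduct_comm (Φ *ᵥ w) φ, hf1, hk]
    ring
  have part1 : 0 ≤ k - kb ⬝ᵥ w - γ * (w ⬝ᵥ w) := hexp ▸ hvv
  have hs2nn : 0 ≤ w ⬝ᵥ w := Finset.sum_nonneg fun i _ => mul_self_nonneg _
  have hξ : 0 < k + γ - kb ⬝ᵥ w := by nlinarith [mul_nonneg hγ.le hs2nn]
  set ξ := k + γ - kb ⬝ᵥ w with hξdef
  constructor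
  · rw [pow_two, ← Matrix.mulVec_mulVec, hs2]
    exact part1
  -- second part
  set A' := K' + γ • (1 : Matrix (Fin t ⊕ Unit) (Fin t ⊕ Unit) ℝ) with hA'def
  have hA'blocks : A' = Matrix.fromBlocks A (Matrix.replicateCol Unit kb) (Matrix.replicateRow Unit kb)
      (Matrix.of fun _ _ => k + γ) := by
    rw [hA'def, hAdef]
    have hK'e : K' = Matrix.fromBlocks K (Matrix.replicateCol Unit kb) (Matrix.replicateRow Unit kb)
        (Matrix.of fun _ _ => k) := rfl
    rw [hK'e, ← Matrix.fromBlocks_one, Matrix.fromBlocks_smul, Matrix.fromBlocks_add]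
    congr 1 <;> simp [unit_of_smul_one, add_smul]
  set B : Matrix (Fin t ⊕ Unit) (Fin t ⊕ Unit) ℝ :=
    Matrix.fromBlocks (A⁻¹ + ξ⁻¹ • (Matrix.replicateCol Unit w * Matrix.replicateRow Unit w))
      ((-ξ⁻¹) • Matrix.replicateCol Unit w) ((-ξ⁻¹) • Matrix.replicateRow Unit w)
      (ξ⁻¹ • 1) with hBdef
  have hmul : A' * B = 1 := by
    rw [hA'blocks, hBdef, Matrix.fromBlocks_multiply, ← Matrix.fromBlocks_one]
    have e11 : A * (A⁻¹ + ξ⁻¹ • (Matrix.replicateCol Unit w * Matrix.replicateRow Unit w)) +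
        Matrix.replicateCol Unit kb * ((-ξ⁻¹) • Matrix.replicateRow Unit w) = 1 := by
      rw [Matrix.mul_add, hAA, Matrix.mul_smul, Matrix.mul_smul, ← Matrix.mul_assoc,
        ← Matrix.replicateCol_mulVec, hAw, neg_smul]
      abel
    have e12 : A * ((-ξ⁻¹) • Matrix.replicateCol Unit w) +
        Matrix.replicateCol Unit kb * (ξ⁻¹ • (1 : Matrix Unit Unit ℝ)) = 0 := by
      rw [Matrix.mul_smul, Matrix.mul_smul, ← Matrix.replicateCol_mulVec, hAw, Matrix.mul_one, neg_smul]
      abel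
    have hrw : Matrix.replicateRow Unit kb * A⁻¹ = Matrix.replicateRow Unit w := by
      rw [← Matrix.replicateRow_vecMul, hwA]
    have e21 : Matrix.replicateRow Unit kb * (A⁻¹ + ξ⁻¹ • (Matrix.replicateCol Unit w * Matrix.replicateRow Unit w)) +
        (Matrix.of fun _ _ => k + γ : Matrix Unit Unit ℝ) * ((-ξ⁻¹) • Matrix.replicateRow Unit w) = 0 := by
      rw [Matrix.mul_add, hrw, Matrix.mul_smul, ← Matrix.mul_assoc, Matrix.replicateRow_mul_replicateCol,
        unit_of_smul_one (kb ⬝ᵥ w), unit_of_smul_one (k + γ), Matrix.smul_mul, Matrix.smul_mul,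
        Matrix.one_mul, Matrix.mul_smul, smul_smul, smul_smul, Matrix.one_mul]
      have hc : (1 : ℝ) + ξ⁻¹ * (kb ⬝ᵥ w) + (k + γ) * -ξ⁻¹ = 0 := by
        have h' : (1 : ℝ) + ξ⁻¹ * (kb ⬝ᵥ w) + (k + γ) * -ξ⁻¹ = 1 - ξ * ξ⁻¹ := by
          rw [hξdef]; ring
        rw [h', mul_inv_cancel₀ hξ.ne', sub_self]
      have hcomb : Matrix.replicateRow Unit w + (ξ⁻¹ * (kb ⬝ᵥ w)) • Matrix.replicateRow Unit w +
          ((k + γ) * -ξ⁻¹) • Matrix.replicateRow Unit w =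
          ((1 : ℝ) + ξ⁻¹ * (kb ⬝ᵥ w) + (k + γ) * -ξ⁻¹) • Matrix.replicateRow Unit w := by
        module
      rw [hcomb, hc, zero_smul]
    have e22 : Matrix.replicateRow Unit kb * ((-ξ⁻¹) • Matrix.replicateCol Unit w) +
        (Matrix.of fun _ _ => k + γ) * (ξ⁻¹ • (1 : Matrix Unit Unit ℝ)) = 1 := by
      rw [Matrix.mul_smul, Matrix.replicateRow_mul_replicateCol, unit_of_smul_one (kb ⬝ᵥ w),
        unit_of_smul_one (k + γ), Matrix.smul_mul, Matrix.one_mul, smul_smul, smul_smul,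
        ← add_smul]
      have hc : -ξ⁻¹ * (kb ⬝ᵥ w) + (k + γ) * ξ⁻¹ = 1 := by
        have h' : -ξ⁻¹ * (kb ⬝ᵥ w) + (k + γ) * ξ⁻¹ = ξ * ξ⁻¹ := by rw [hξdef]; ring
        rw [h', mul_inv_cancel₀ hξ.ne']
      rw [hc, one_smul]
    rw [e11, e12, e21, e22]
  have hB : A'⁻¹ = B := Matrix.inv_eq_right_inv hmul
  have hA'A'inv : A' * A'⁻¹ = 1 := by rw [hB]; exact hmul
  have htr1 : Matrix.trace (K * A⁻¹) = (t : ℝ) - γ * Matrix.trace A⁻¹ := by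
    have h1 : K * A⁻¹ = 1 - γ • A⁻¹ := by
      rw [hKA, Matrix.sub_mul, hAA, Matrix.smul_mul, Matrix.one_mul]
    rw [h1, Matrix.trace_sub, Matrix.trace_one, Matrix.trace_smul, smul_eq_mul]
    simp
  have htr2 : Matrix.trace (K' * A'⁻¹) =
      ((t : ℝ) + 1) - γ * (Matrix.trace A⁻¹ + (ξ⁻¹ * (w ⬝ᵥ w) + ξ⁻¹)) := by
    have hK'A : K' = A' - γ • 1 := by rw [hA'def, add_sub_cancel_right]
    have h1 : K' * A'⁻¹ = 1 - γ • A'⁻¹ := by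
      rw [hK'A, Matrix.sub_mul, hA'A'inv, Matrix.smul_mul, Matrix.one_mul]
    have htrB : Matrix.trace B = Matrix.trace A⁻¹ + (ξ⁻¹ * (w ⬝ᵥ w) + ξ⁻¹) := by
      rw [hBdef, trace_fromBlocks_aux, Matrix.trace_add, Matrix.trace_smul,
        Matrix.trace_replicateCol_mul_replicateRow, Matrix.trace_smul, Matrix.trace_one, smul_eq_mul, smul_eq_mul]
      simp [add_assoc]
    rw [h1, Matrix.trace_sub, Matrix.trace_one, Matrix.trace_smul, hB, htrB, smul_eq_mul]
    simp [Fintype.card_sum]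
  rw [htr1, htr2]
  have key : γ * (ξ⁻¹ * (w ⬝ᵥ w) + ξ⁻¹) ≤ 1 := by
    have h1 : γ * (ξ⁻¹ * (w ⬝ᵥ w) + ξ⁻¹) = (γ * (w ⬝ᵥ w + 1)) * ξ⁻¹ := by ring
    have h2 : γ * (w ⬝ᵥ w + 1) ≤ ξ := by rw [hξdef]; nlinarith
    have h3 : (γ * (w ⬝ᵥ w + 1)) * ξ⁻¹ ≤ ξ * ξ⁻¹ :=
      mul_le_mul_of_nonneg_right h2 (inv_nonneg.mpr hξ.le)
    rw [mul_inv_cancel₀ hξ.ne'] at h3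
    rw [h1]
    exact h3
  nlinarith [key]
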